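/- Assume P satisfies a margin condition with radius r_0. Then for every optimal codebook c* ∈ 𝓜 and every codebook c ∈ B(0,M)^k with ‖c − c*‖ ≤ B r_0/(4√2 M), one has R(c) − R(c*) ≥ (p_min/2) ‖c − c*‖², where ‖c − c*‖² = ∑_{j=1}^k ‖c_j − c*_j‖². -/

import Mathlib

open MeasureTheory Metric
open scoped Classical ENNReal NNReal BigOperators RealInnerProductSpace

noncomputable section

namespace Kmeans


variable {H : Type*} [NormedAddCommGroup H] [InnerProductSpace ℝ H]
  [MeasurableSpace H]

/-- Distortion of a codebook `c` with respect to the measure `P`. -/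
def distortion (P : Measure H) (k : ℕ) (c : Fin k → H) : ℝ :=
  ∫ x, (⨅ j : Fin k, ‖x - c j‖ ^ 2) ∂P

/-- The `j`-th closed Voronoi cell of the codebook `c`. -/
def voronoi (k : ℕ) (c : Fin k → H) (j : Fin k) : Set H :=
  {x : H | ∀ i : Fin k, ‖x - c j‖ ≤ ‖x - c i‖}

/-- The set `𝓜` of optimal codebooks, i.e. minimizers of the distortion. -/
def optimal (P : Measure H) (k : ℕ) : Set (Fin k → H) :=
  {c | ∀ c' : Fin k → H, distortion P k c ≤ distortion P k c'}

/-- `B`: minimal separation between two codepoints of an optimal codebook. -/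
def Bsep (P : Measure H) (k : ℕ) : ℝ :=
  sInf {r : ℝ | ∃ c ∈ optimal P k, ∃ i j : Fin k, i ≠ j ∧ r = ‖c i - c j‖}

/-- `p_min`: minimal mass of a Voronoi cell of an optimal codebook. -/
def pmin (P : Measure H) (k : ℕ) : ℝ :=
  sInf {r : ℝ | ∃ c ∈ optimal P k, ∃ j : Fin k, r = (P (voronoi k c j)).toReal}

/-- `N(c)`: the skeleton of the Voronoi diagram of `c`. -/
def Ncrit (k : ℕ) (c : Fin k → H) : Set H :=
  ⋃ (i : Fin k) (j : Fin k) (_ : i ≠ j), {x : H | ‖x - c i‖ = ‖x - c j‖}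

/-- `p(t)`: maximal mass of the `t`-neighborhood of the skeleton of an optimal codebook. -/
def pweight (P : Measure H) (k : ℕ) (t : ℝ) : ℝ :=
  sSup {r : ℝ | ∃ c ∈ optimal P k, r = (P {x : H | infDist x (Ncrit k c) ≤ t}).toReal}

/-- `P` is `M`-bounded: its support is contained in the closed ball of radius `M`. -/
def MBounded (P : Measure H) (M : ℝ) : Prop :=
  P (closedBall (0 : H) M) = 1

/-- The support of `P` contains more than `k` points. -/
def SupportMoreThan (P : Measure H) (k : ℕ) : Prop :=
  ∃ S : Finset H, k < S.card ∧ ∀ x ∈ S, ∀ ε : ℝ, 0 < ε → 0 < P (ball x ε)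

/-- The margin condition with radius `r₀`. -/
def MarginCondition (P : Measure H) (k : ℕ) (M r₀ : ℝ) : Prop :=
  0 < r₀ ∧ MBounded P M ∧
    ∀ t : ℝ, 0 ≤ t → t ≤ r₀ →
      pweight P k t ≤ Bsep P k * pmin P k * t / (128 * M ^ 2)

/-- The cells `W_j(c)` forming a partition subordinated to the Voronoi diagram. -/
def Wcell (k : ℕ) (c : Fin k → H) (j : Fin k) : Set H :=
  voronoi k c j \ ⋃ (i : Fin k) (_ : i < j), voronoi k c i

/-- `𝓜‾`: codebooks satisfying the centroid condition (stationary points). -/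
def stationary (P : Measure H) (k : ℕ) : Set (Fin k → H) :=
  {c | ∀ i : Fin k, (P (Wcell k c i)).toReal • c i = ∫ x in Wcell k c i, x ∂P}

/-- `P` is `ε`-separated. -/
def Separated (P : Measure H) (k : ℕ) (ε : ℝ) : Prop :=
  ∀ c ∈ stationary P k \ optimal P k, ∀ cs ∈ optimal P k,
    ε ≤ distortion P k c - distortion P k cs

/-- Euclidean distance between codebooks. -/
def cbDist (k : ℕ) (c c' : Fin k → H) : ℝ :=
  Real.sqrt (∑ j : Fin k, ‖c j - c' j‖ ^ 2)

/-- The empirical measure of a sample. -/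
def empMeasure {n : ℕ} (X : Fin n → H) : Measure H :=
  ((n : ℝ≥0∞))⁻¹ • ∑ i : Fin n, Measure.dirac (X i)

/-- Number of optimal codebooks up to relabeling of codepoints. -/
def MbarCard (P : Measure H) (k : ℕ) : ℕ :=
  Set.ncard {s : Set (Fin k → H) |
    ∃ c ∈ optimal P k, s = {c' | ∃ π : Equiv.Perm (Fin k), c' = c ∘ π}}

/-- The mass `p_{ij}(c,t)` of a slab along the segment `[c_i, c_j]` intersected with `V_j(c)`. -/
def pij (P : Measure H) (k : ℕ) (c : Fin k → H) (i j : Fin k) (t : ℝ) : ℝ :=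
  (P ({x : H |
      0 ≤ ⟪x - (2⁻¹ : ℝ) • (c i + c j), ‖c i - c j‖⁻¹ • (c j - c i)⟫ ∧
      ⟪x - (2⁻¹ : ℝ) • (c i + c j), ‖c i - c j‖⁻¹ • (c j - c i)⟫ ≤ t} ∩
    voronoi k c j)).toReal

/-- The classification risk between two (ordered) partitions. -/
def classifRisk (P : Measure H) (k : ℕ) (C C' : Fin k → Set H) : ℝ :=
  sInf {r : ℝ | ∃ π : Equiv.Perm (Fin k),
    r = (P (⋃ j : Fin k, C (π j) ∩ (C' j)ᶜ)).toReal}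

/-- A sample is `f`-clusterable. -/
def Clusterable {n : ℕ} (X : Fin n → H) (k : ℕ) (f : ℝ) : Prop :=
  ∃ c ∈ optimal (empMeasure X) k, ∀ i j : Fin k, i ≠ j →
    f * Real.sqrt (distortion (empMeasure X) k c) *
      (1 / Real.sqrt ((Finset.univ.filter fun a => X a ∈ voronoi k c i).card) +
       1 / Real.sqrt ((Finset.univ.filter fun a => X a ∈ voronoi k c j).card))
      ≤ ‖c i - c j‖

/-- Membership in the class `𝓓(B₋, r₀₋, p₋, ε₋)` of distributions. -/
def inClassD (P : Measure H) (k : ℕ) (M Bm rm pm em : ℝ) : Prop :=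
  IsProbabilityMeasure P ∧ SupportMoreThan P k ∧
    (∃ r₀ : ℝ, rm ≤ r₀ ∧ MarginCondition P k M r₀) ∧
    Bm ≤ Bsep P k ∧ pm ≤ pmin P k ∧ Separated P k em

end Kmeans

section Aux

variable {H : Type*} [NormedAddCommGroup H] [InnerProductSpace ℝ H]

lemma sq_norm_sub_sq_norm (u v : H) : ‖u‖ ^ 2 - ‖v‖ ^ 2 = ⟪u - v, u + v⟫ := by
  rw [inner_sub_left, inner_add_right, inner_add_right,
    real_inner_self_eq_norm_sq, real_inner_self_eq_norm_sq, real_inner_comm]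
  ring

lemma normsq_sub_bound (x a b : H) (M : ℝ) (hx : ‖x‖ ≤ M) (ha : ‖a‖ ≤ M) (hb : ‖b‖ ≤ M) :
    ‖x - a‖ ^ 2 - ‖x - b‖ ^ 2 ≤ 4 * M * ‖a - b‖ := by
  have h := sq_norm_sub_sq_norm (x - a) (x - b)
  have h1 : (x - a) - (x - b) = b - a := by abel
  have h2 : ‖(x - a) + (x - b)‖ ≤ 4 * M := by
    have := norm_add_le (x - a) (x - b)
    have h3 := norm_sub_le x a
    have h4 := norm_sub_le x b
    linarith
  rw [h, h1]
  calc ⟪b - a, (x - a) + (x - b)⟫ ≤ ‖b - a‖ * ‖(x - a) + (x - b)‖ := real_inner_le_norm _ _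
    _ ≤ ‖a - b‖ * (4 * M) := by
        rw [norm_sub_rev b a]
        exact mul_le_mul_of_nonneg_left h2 (norm_nonneg _)
    _ = 4 * M * ‖a - b‖ := by ring

lemma exists_bisector_point (x a b : H) (hab : a ≠ b) :
    ∃ y : H, ‖y - a‖ = ‖y - b‖ ∧
      dist x y = |‖x - a‖ ^ 2 - ‖x - b‖ ^ 2| / (2 * ‖b - a‖) := by
  set d := b - a with hd
  have hd0 : d ≠ 0 := sub_ne_zero.mpr (Ne.symm hab)
  have hdn : (0:ℝ) < ‖d‖ := norm_pos_iff.mpr hd0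
  set S := ‖x - a‖ ^ 2 - ‖x - b‖ ^ 2 with hS
  set s : ℝ := S / (2 * ‖d‖ ^ 2) with hs
  refine ⟨x - s • d, ?_, ?_⟩
  · have key : ‖x - s • d - a‖ ^ 2 - ‖x - s • d - b‖ ^ 2 = 0 := by
      rw [sq_norm_sub_sq_norm]
      have e1 : (x - s • d - a) - (x - s • d - b) = d := by rw [hd]; abel
      have e2 : (x - s • d - a) + (x - s • d - b) = ((x - a) + (x - b)) - (2 * s) • d := by
        rw [two_mul, add_smul]; abel
      rw [e1, e2, inner_sub_right, inner_smul_right, real_inner_self_eq_norm_sq]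
      have e3 : ⟪d, (x - a) + (x - b)⟫ = S := by
        rw [hS, sq_norm_sub_sq_norm (x - a) (x - b)]
        congr 1
        rw [hd]; abel
      rw [e3, hs]
      field_simp
      ring
    nlinarith [norm_nonneg (x - s • d - a), norm_nonneg (x - s • d - b),
      sq_nonneg (‖x - s • d - a‖ - ‖x - s • d - b‖)]
  · rw [dist_eq_norm]
    have e4 : x - (x - s • d) = s • d := by abel
    rw [e4, norm_smul, Real.norm_eq_abs, hs, abs_div]
    rw [abs_of_pos (by positivity : (0:ℝ) < 2 * ‖d‖ ^ 2)]
    field_simp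

end Aux

section Cells

variable {H : Type*} [NormedAddCommGroup H] [InnerProductSpace ℝ H]
  [MeasurableSpace H] [BorelSpace H]

open Kmeans

lemma isClosed_voronoi (k : ℕ) (c : Fin k → H) (j : Fin k) : IsClosed (voronoi k c j) := by
  have he : voronoi k c j = ⋂ i, {x : H | ‖x - c j‖ ≤ ‖x - c i‖} := by
    ext x; simp [voronoi, Set.mem_iInter]
  rw [he]
  refine isClosed_iInter fun i => isClosed_le ?_ ?_
  · exact (continuous_id.sub continuous_const).norm
  · exact (continuous_id.sub continuous_const).norm

lemma measurableSet_voronoi (k : ℕ) (c : Fin k → H) (j : Fin k) :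
    MeasurableSet (voronoi k c j) :=
  (isClosed_voronoi k c j).measurableSet

lemma measurableSet_Wcell (k : ℕ) (c : Fin k → H) (j : Fin k) :
    MeasurableSet (Wcell k c j) :=
  (measurableSet_voronoi k c j).diff
    (MeasurableSet.iUnion fun i => MeasurableSet.iUnion fun _ => measurableSet_voronoi k c i)

lemma Wcell_subset (k : ℕ) (c : Fin k → H) (j : Fin k) : Wcell k c j ⊆ voronoi k c j :=
  Set.diff_subset

lemma Wcell_disjoint (k : ℕ) (c : Fin k → H) :
    Pairwise (Function.onFun Disjoint (Wcell k c)) := by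
  have key : ∀ i j : Fin k, i < j → Disjoint (Wcell k c i) (Wcell k c j) := by
    intro i j hij
    refine Set.disjoint_left.mpr fun x hxi hxj => ?_
    exact hxj.2 (Set.mem_iUnion.mpr ⟨i, Set.mem_iUnion.mpr ⟨hij, hxi.1⟩⟩)
  intro i j hij
  rcases hij.lt_or_gt with h | h
  · exact key i j h
  · exact (key j i h).symm

lemma Wcell_iUnion (k : ℕ) (hk : 1 ≤ k) (c : Fin k → H) :
    ⋃ j, Wcell k c j = Set.univ := by
  have : Nonempty (Fin k) := Fin.pos_iff_nonempty.mp hk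
  ext x
  simp only [Set.mem_univ, iff_true, Set.mem_iUnion]
  have hne : (Finset.univ.filter fun j : Fin k => x ∈ voronoi k c j).Nonempty := by
    obtain ⟨j0, hj0⟩ := Finite.exists_min fun j : Fin k => ‖x - c j‖
    exact ⟨j0, by simp only [Finset.mem_filter, Finset.mem_univ, true_and]; exact fun i => hj0 i⟩
  set s := Finset.univ.filter fun j : Fin k => x ∈ voronoi k c j with hs
  refine ⟨s.min' hne, ?_, ?_⟩
  · have := s.min'_mem hne
    simp only [hs, Finset.mem_filter] at this
    exact this.2
  · intro hmem
    simp only [Set.mem_iUnion] at hmem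
    obtain ⟨i, hlt, hVi⟩ := hmem
    have : s.min' hne ≤ i := Finset.min'_le s i (by simp [hs, hVi])
    exact absurd hlt (not_lt.mpr this)

lemma voronoi_diff_Wcell_subset (k : ℕ) (c : Fin k → H) (j : Fin k) :
    voronoi k c j \ Wcell k c j ⊆ Ncrit k c := by
  rintro x ⟨hV, hW⟩
  have hx : x ∈ ⋃ i, ⋃ (_ : i < j), voronoi k c i := by
    by_contra h
    exact hW ⟨hV, h⟩
  simp only [Set.mem_iUnion] at hx
  obtain ⟨i, hlt, hVi⟩ := hx
  have heq : ‖x - c i‖ = ‖x - c j‖ := le_antisymm (hVi j) (hV i)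
  exact Set.mem_iUnion.mpr ⟨i, Set.mem_iUnion.mpr ⟨j, Set.mem_iUnion.mpr ⟨hlt.ne, heq⟩⟩⟩

end Cells

open Kmeans

variable {H : Type*} [NormedAddCommGroup H] [InnerProductSpace ℝ H]
  [MeasurableSpace H] [BorelSpace H] [SecondCountableTopology H] [CompleteSpace H]

set_option maxHeartbeats 2000000 in
/-- local convexity of the distortion around optimal codebooks
under the margin condition. -/
theorem local_convexity_of_margin
    (P : Measure H) [IsProbabilityMeasure P] (k : ℕ) (M r₀ : ℝ)
    (hk : 1 ≤ k) (hM : 0 < M) (hsupp : SupportMoreThan P k)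
    (hmargin : MarginCondition P k M r₀) :
    ∀ cs ∈ optimal P k, ∀ c : Fin k → H,
      (∀ j : Fin k, c j ∈ closedBall (0 : H) M) →
      cbDist k c cs ≤ Bsep P k * r₀ / (4 * Real.sqrt 2 * M) →
      pmin P k / 2 * ∑ j : Fin k, ‖c j - cs j‖ ^ 2 ≤
        distortion P k c - distortion P k cs := by
  classical
  obtain ⟨hr₀, hMB, hmar⟩ := hmargin
  intro cs hcs c hcB hcd
  have hk' : Nonempty (Fin k) := Fin.pos_iff_nonempty.mp hk
  have hR0 : 0 ≤ distortion P k c - distortion P k cs := sub_nonneg.mpr (hcs c)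
  set Δ := ∑ j : Fin k, ‖c j - cs j‖ ^ 2 with hΔdef
  have hΔ0 : 0 ≤ Δ := Finset.sum_nonneg fun j _ => sq_nonneg _
  set δ := cbDist k c cs with hδdef
  have hδΔ : δ = Real.sqrt Δ := by rw [hδdef, hΔdef]; rfl
  have hδ0 : 0 ≤ δ := by rw [hδΔ]; exact Real.sqrt_nonneg _
  have hδsq : δ ^ 2 = Δ := by rw [hδΔ]; exact Real.sq_sqrt hΔ0
  by_cases hple : pmin P k ≤ 0
  · have hle : pmin P k / 2 * Δ ≤ 0 :=
      mul_nonpos_iff.mpr (Or.inr ⟨by linarith, hΔ0⟩)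
    linarith
  push_neg at hple
  by_cases hBle0 : Bsep P k ≤ 0
  · have hnum : Bsep P k * r₀ ≤ 0 := mul_nonpos_iff.mpr (Or.inr ⟨hBle0, hr₀.le⟩)
    have hden : (0:ℝ) ≤ 4 * Real.sqrt 2 * M := by positivity
    have hz : Bsep P k * r₀ / (4 * Real.sqrt 2 * M) ≤ 0 :=
      div_nonpos_iff.mpr (Or.inr ⟨hnum, hden⟩)
    have hδz : δ = 0 := le_antisymm (hcd.trans hz) hδ0
    have hΔz : Δ = 0 := by rw [← hδsq, hδz]; ring
    rw [hΔz]
    simpa using hR0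
  push_neg at hBle0
  set B := Bsep P k with hBdef
  set p := pmin P k with hpdef
  -- basic measure facts
  have htoReal_le_one : ∀ s : Set H, (P s).toReal ≤ 1 := by
    intro s
    simpa using ENNReal.toReal_mono ENNReal.one_ne_top prob_le_one
  have hball : P (closedBall (0:H) M)ᶜ = 0 := by
    have hMB' : P (closedBall (0:H) M) = 1 := hMB
    rw [measure_compl measurableSet_closedBall (measure_ne_top P _), measure_univ, hMB',
      tsub_self]
  have hae : ∀ᵐ x ∂P, ‖x‖ ≤ M := by
    rw [ae_iff]
    have he : {x : H | ¬ ‖x‖ ≤ M} = (closedBall (0:H) M)ᶜ := by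
      ext x; simp [mem_closedBall, dist_zero_right]
    rw [he]; exact hball
  have hIntB : ∀ f : H → ℝ, Measurable f → ∀ C : ℝ, (∀ x : H, ‖x‖ ≤ M → ‖f x‖ ≤ C) →
      Integrable f P := by
    intro f hf C hC
    exact Integrable.mono' (integrable_const C) hf.aestronglyMeasurable
      (hae.mono fun x hx => hC x hx)
  have hbdd : ∀ (d : Fin k → H) (x : H),
      BddBelow (Set.range fun i : Fin k => ‖x - d i‖ ^ 2) := by
    intro d x
    refine ⟨0, ?_⟩
    rintro y ⟨i, rfl⟩
    positivity
  have hFnn : ∀ (d : Fin k → H) (x : H), 0 ≤ ⨅ i : Fin k, ‖x - d i‖ ^ 2 := fun d x =>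
    le_ciInf fun i => sq_nonneg _
  have hFmeas : ∀ d : Fin k → H, Measurable fun x : H => ⨅ i : Fin k, ‖x - d i‖ ^ 2 :=
    fun d => Measurable.iInf fun i =>
      ((continuous_id.sub continuous_const).norm.pow 2).measurable
  have hFint : ∀ d : Fin k → H, Integrable (fun x : H => ⨅ i : Fin k, ‖x - d i‖ ^ 2) P := by
    intro d
    obtain ⟨i0⟩ := hk'
    refine hIntB _ (hFmeas d) ((M + ‖d i0‖) ^ 2) fun x hx => ?_
    rw [Real.norm_eq_abs, abs_of_nonneg (hFnn d x)]
    calc (⨅ i : Fin k, ‖x - d i‖ ^ 2) ≤ ‖x - d i0‖ ^ 2 := ciInf_le (hbdd d x) i0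
      _ ≤ (M + ‖d i0‖) ^ 2 := by
          have h1 : ‖x - d i0‖ ≤ M + ‖d i0‖ := (norm_sub_le x (d i0)).trans (by linarith)
          nlinarith [norm_nonneg (x - d i0), norm_nonneg (d i0)]
  have hNint : ∀ v : H, Integrable (fun x : H => ‖x - v‖ ^ 2) P := by
    intro v
    refine hIntB _ (((continuous_id.sub continuous_const).norm.pow 2).measurable)
      ((M + ‖v‖) ^ 2) fun x hx => ?_
    rw [Real.norm_eq_abs, abs_of_nonneg (sq_nonneg _)]
    have h1 : ‖x - v‖ ≤ M + ‖v‖ := (norm_sub_le x v).trans (by linarith)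
    nlinarith [norm_nonneg (x - v), norm_nonneg v]
  have hXint : ∀ v : H, Integrable (fun x : H => x - v) P := by
    intro v
    refine Integrable.mono' (integrable_const (M + ‖v‖))
      ((measurable_id.sub measurable_const).aestronglyMeasurable) (hae.mono fun x hx => ?_)
    exact (norm_sub_le x v).trans (by linarith)
  have hIdint : Integrable (fun x : H => x) P := by simpa using hXint 0
  -- cells
  set W := Wcell k cs with hWdef
  have hWm : ∀ j, MeasurableSet (W j) := measurableSet_Wcell k cs
  have hWd : Pairwise (Function.onFun Disjoint W) := by
    rw [hWdef]; exact Wcell_disjoint k cs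
  have hWu : ⋃ j, W j = Set.univ := by
    rw [hWdef]; exact Wcell_iUnion k hk cs
  have hsplit : ∀ f : H → ℝ, Integrable f P →
      ∫ x, f x ∂P = ∑ j : Fin k, ∫ x in W j, f x ∂P := by
    intro f hf
    rw [← setIntegral_univ, ← hWu]
    exact integral_iUnion_fintype hWm hWd fun i => hf.integrableOn
  -- pweight facts
  have hpw : ∀ t : ℝ, (P {x : H | infDist x (Ncrit k cs) ≤ t}).toReal ≤ pweight P k t := by
    intro t
    refine le_csSup ⟨1, ?_⟩ ⟨cs, hcs, rfl⟩
    rintro r ⟨c', _, rfl⟩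
    exact htoReal_le_one _
  have hNnull : P (Ncrit k cs) = 0 := by
    have h0 := (hpw 0).trans (hmar 0 le_rfl hr₀.le)
    rw [mul_zero, zero_div] at h0
    have h0'' : P {x : H | infDist x (Ncrit k cs) ≤ 0} = 0 := by
      have h0' := le_antisymm h0 ENNReal.toReal_nonneg
      exact ((ENNReal.toReal_eq_zero_iff _).mp h0').resolve_right (measure_ne_top P _)
    refine measure_mono_null ?_ h0''
    intro x hx
    simp only [Set.mem_setOf_eq]
    exact le_of_eq (infDist_zero_of_mem hx)
  have hVW : ∀ j, P (voronoi k cs j) = P (W j) := by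
    intro j
    refine le_antisymm ?_ (measure_mono (Wcell_subset k cs j))
    calc P (voronoi k cs j) ≤ P (W j ∪ (voronoi k cs j \ W j)) := by
          refine measure_mono fun x hx => ?_
          by_cases h : x ∈ W j
          · exact Or.inl h
          · exact Or.inr ⟨hx, h⟩
      _ ≤ P (W j) + P (voronoi k cs j \ W j) := measure_union_le _ _
      _ = P (W j) := by
          rw [measure_mono_null (voronoi_diff_Wcell_subset k cs j) hNnull, add_zero]
  have hpmin_le : ∀ j, p ≤ (P (W j)).toReal := by
    intro j
    have hb : BddBelow {r : ℝ | ∃ c' ∈ optimal P k, ∃ j' : Fin k,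
        r = (P (voronoi k c' j')).toReal} := by
      refine ⟨0, ?_⟩
      rintro r ⟨c', _, j', rfl⟩
      exact ENNReal.toReal_nonneg
    have h1 : p ≤ (P (voronoi k cs j)).toReal := csInf_le hb ⟨cs, hcs, j, rfl⟩
    rwa [hVW j] at h1
  have hWpos : ∀ j, 0 < (P (W j)).toReal := fun j => lt_of_lt_of_le hple (hpmin_le j)
  have hinf_vor : ∀ (j : Fin k) (x : H), x ∈ voronoi k cs j →
      (⨅ i : Fin k, ‖x - cs i‖ ^ 2) = ‖x - cs j‖ ^ 2 := by
    intro j x hx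
    refine le_antisymm (ciInf_le (hbdd cs x) j) (le_ciInf fun i => ?_)
    have h1 : ‖x - cs j‖ ≤ ‖x - cs i‖ := hx i
    nlinarith [norm_nonneg (x - cs j)]
  have hdcs : distortion P k cs = ∑ j : Fin k, ∫ x in W j, ‖x - cs j‖ ^ 2 ∂P := by
    rw [show distortion P k cs = ∫ x, (⨅ i : Fin k, ‖x - cs i‖ ^ 2) ∂P from rfl,
      hsplit _ (hFint cs)]
    refine Finset.sum_congr rfl fun j _ => ?_
    refine setIntegral_congr_fun (hWm j) fun x hx => ?_
    exact hinf_vor j x hx.1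
  have hcellopt : ∀ (j : Fin k) (b : H),
      ∫ x in W j, ‖x - cs j‖ ^ 2 ∂P ≤ ∫ x in W j, ‖x - b‖ ^ 2 ∂P := by
    intro j b
    set c' := Function.update cs j b with hc'
    have h2 : distortion P k c' ≤ ∑ i : Fin k, ∫ x in W i, ‖x - c' i‖ ^ 2 ∂P := by
      rw [show distortion P k c' = ∫ x, (⨅ i : Fin k, ‖x - c' i‖ ^ 2) ∂P from rfl,
        hsplit _ (hFint c')]
      refine Finset.sum_le_sum fun i _ => ?_
      exact integral_mono_ae (hFint c').integrableOn (hNint (c' i)).integrableOn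
        (ae_of_all _ fun x => ciInf_le (hbdd c' x) i)
    have h4 : ∑ i : Fin k, ∫ x in W i, ‖x - cs i‖ ^ 2 ∂P
        ≤ ∑ i : Fin k, ∫ x in W i, ‖x - c' i‖ ^ 2 ∂P := by
      rw [← hdcs]; exact (hcs c').trans h2
    have h5 : ∀ i ∈ Finset.univ.erase j,
        ∫ x in W i, ‖x - c' i‖ ^ 2 ∂P = ∫ x in W i, ‖x - cs i‖ ^ 2 ∂P := by
      intro i hi
      rw [hc', Function.update_of_ne (Finset.ne_of_mem_erase hi)]
    rw [← Finset.sum_erase_add _ _ (Finset.mem_univ j),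
      ← Finset.sum_erase_add _ _ (Finset.mem_univ j),
      Finset.sum_congr rfl h5] at h4
    have h6 : ∫ x in W j, ‖x - cs j‖ ^ 2 ∂P ≤ ∫ x in W j, ‖x - c' j‖ ^ 2 ∂P := by linarith
    simpa only [hc', Function.update_self] using h6
  have hexp : ∀ (j : Fin k) (b : H),
      ∫ x in W j, ‖x - b‖ ^ 2 ∂P = ∫ x in W j, ‖x - cs j‖ ^ 2 ∂P
        + (2 * ⟪cs j - b, ∫ x in W j, (x - cs j) ∂P⟫
          + (P (W j)).toReal * ‖cs j - b‖ ^ 2) := by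
    intro j b
    have hptw : ∀ x : H, ‖x - b‖ ^ 2
        = ‖x - cs j‖ ^ 2 + (2 * ⟪cs j - b, x - cs j⟫ + ‖cs j - b‖ ^ 2) := by
      intro x
      have h := norm_add_sq_real (x - cs j) (cs j - b)
      rw [sub_add_sub_cancel] at h
      rw [h, real_inner_comm]
      ring
    have hg1 : Integrable (fun x : H => 2 * ⟪cs j - b, x - cs j⟫) P := by
      refine Integrable.const_mul ?_ 2
      refine hIntB _ ?_ (‖cs j - b‖ * (M + ‖cs j‖)) fun x hx => ?_
      · exact (Continuous.inner continuous_const (continuous_id.sub continuous_const)).measurable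
      · rw [Real.norm_eq_abs]
        refine (abs_real_inner_le_norm _ _).trans ?_
        exact mul_le_mul_of_nonneg_left ((norm_sub_le x (cs j)).trans (by linarith))
          (norm_nonneg _)
    have hIinner : ∫ x in W j, ⟪cs j - b, x - cs j⟫ ∂P
        = ⟪cs j - b, ∫ x in W j, (x - cs j) ∂P⟫ :=
      integral_inner ((hXint (cs j)).integrableOn) (cs j - b)
    have hgsum : Integrable (fun x : H => 2 * ⟪cs j - b, x - cs j⟫ + ‖cs j - b‖ ^ 2) P :=
      hg1.add (integrable_const _)
    rw [setIntegral_congr_fun (hWm j) fun x _ => hptw x,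
      integral_add ((hNint (cs j)).integrableOn) (hgsum.integrableOn),
      integral_add (hg1.integrableOn) ((integrable_const _).integrableOn),
      integral_const_mul, hIinner, setIntegral_const, smul_eq_mul, measureReal_def]
  have hcent : ∀ j : Fin k, ∫ x in W j, (x - cs j) ∂P = 0 := by
    intro j
    by_contra hm0
    set mj := ∫ x in W j, (x - cs j) ∂P with hmj
    have hmn : 0 < ‖mj‖ ^ 2 := pow_pos (norm_pos_iff.mpr hm0) 2
    set Pw := (P (W j)).toReal with hPw
    have hPw0 : 0 ≤ Pw := ENNReal.toReal_nonneg
    set ε : ℝ := 1 / (Pw + 1) with hε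
    have hε0 : 0 < ε := by rw [hε]; positivity
    have hkey := hcellopt j (cs j + ε • mj)
    rw [hexp j (cs j + ε • mj)] at hkey
    rw [← hmj] at hkey
    have he1 : cs j - (cs j + ε • mj) = -(ε • mj) := by abel
    rw [he1] at hkey
    have he2 : ⟪-(ε • mj), mj⟫ = -(ε * ‖mj‖ ^ 2) := by
      rw [inner_neg_left, real_inner_smul_left, real_inner_self_eq_norm_sq]
    have he3 : ‖-(ε • mj)‖ ^ 2 = ε ^ 2 * ‖mj‖ ^ 2 := by
      rw [norm_neg, norm_smul, Real.norm_eq_abs, mul_pow, sq_abs]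
    rw [he2, he3] at hkey
    have hq : 0 ≤ 2 * -(ε * ‖mj‖ ^ 2) + Pw * (ε ^ 2 * ‖mj‖ ^ 2) := by linarith
    have hPwε : Pw * ε < 2 := by
      have h1 : Pw * (1 / (Pw + 1)) < 1 := by
        rw [mul_one_div, div_lt_one (by linarith)]
        linarith
      rw [hε]
      linarith
    have h2 := mul_lt_mul_of_pos_right hPwε (mul_pos hε0 hmn)
    nlinarith [h2, hq]
  have hcsB : ∀ j : Fin k, ‖cs j‖ ≤ M := by
    intro j
    have h0 : ∫ x in W j, (x - cs j) ∂P = 0 := hcent j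
    have hintm : ∫ x in W j, (x : H) ∂P = (P (W j)).toReal • cs j := by
      have hsub : ∫ x in W j, (x - cs j) ∂P
          = (∫ x in W j, (x : H) ∂P) - ∫ x in W j, (cs j : H) ∂P :=
        integral_sub hIdint.integrableOn ((integrable_const _).integrableOn)
      rw [h0, setIntegral_const] at hsub
      have := sub_eq_zero.mp hsub.symm
      exact this
    have h1 : ‖∫ x in W j, (x : H) ∂P‖ ≤ ∫ x in W j, ‖x‖ ∂P :=
      norm_integral_le_integral_norm _
    rw [hintm, norm_smul, Real.norm_eq_abs, abs_of_nonneg ENNReal.toReal_nonneg] at h1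
    have h2 : ∫ x in W j, ‖x‖ ∂P ≤ ∫ x in W j, (M : ℝ) ∂P := by
      refine integral_mono_ae (hIdint.norm.integrableOn)
        ((integrable_const _).integrableOn) ?_
      exact ae_restrict_of_ae hae
    rw [setIntegral_const, smul_eq_mul, measureReal_def] at h2
    exact le_of_mul_le_mul_left (by linarith) (hWpos j)
  have hBle : ∀ i j : Fin k, i ≠ j → B ≤ ‖cs i - cs j‖ := by
    intro i j hij
    have hb : BddBelow {r : ℝ | ∃ c' ∈ optimal P k, ∃ i' j' : Fin k, i' ≠ j'
        ∧ r = ‖c' i' - c' j'‖} := by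
      refine ⟨0, ?_⟩
      rintro r ⟨c', _, i', j', _, rfl⟩
      exact norm_nonneg _
    exact csInf_le hb ⟨cs, hcs, i, j, hij, rfl⟩
  -- margin application
  set t : ℝ := 4 * M * δ / B with htdef
  have h4Mδ : (0:ℝ) ≤ 4 * M * δ := by positivity
  have ht0 : 0 ≤ t := by rw [htdef]; exact div_nonneg h4Mδ hBle0.le
  have htr : t ≤ r₀ := by
    rw [htdef, div_le_iff₀ hBle0]
    have hs2 : (1:ℝ) ≤ Real.sqrt 2 := by
      rw [show (1:ℝ) = Real.sqrt 1 by simp]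
      exact Real.sqrt_le_sqrt (by norm_num)
    have h1 : δ * (4 * Real.sqrt 2 * M) ≤ B * r₀ := by
      rw [← le_div_iff₀ (by positivity)]
      exact hcd
    nlinarith [h1, mul_nonneg (mul_nonneg hδ0 hM.le) (sub_nonneg.mpr hs2)]
  have hmt : pweight P k t ≤ p * δ / (32 * M) := by
    refine (hmar t ht0 htr).trans (le_of_eq ?_)
    rw [htdef]
    field_simp
    ring
  have hPA : (P {x : H | infDist x (Ncrit k cs) ≤ t}).toReal ≤ p * δ / (32 * M) :=
    (hpw t).trans hmt
  set A := {x : H | infDist x (Ncrit k cs) ≤ t} with hAdef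
  have hAm : MeasurableSet A := by
    have hcl : IsClosed A := isClosed_le (continuous_infDist_pt _) continuous_const
    exact hcl.measurableSet
  have hInd : Integrable (A.indicator fun _ : H => 8 * M * δ) P :=
    (integrable_const _).indicator hAm
  have hnormle : ∀ l : Fin k, ‖c l - cs l‖ ≤ δ := by
    intro l
    have h1 : ‖c l - cs l‖ ^ 2 ≤ Δ := by
      rw [hΔdef]
      exact Finset.single_le_sum (f := fun j : Fin k => ‖c j - cs j‖ ^ 2)
        (fun i _ => sq_nonneg _) (Finset.mem_univ l)
    calc ‖c l - cs l‖ = Real.sqrt (‖c l - cs l‖ ^ 2) := (Real.sqrt_sq (norm_nonneg _)).symm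
      _ ≤ Real.sqrt Δ := Real.sqrt_le_sqrt h1
      _ = δ := hδΔ.symm
  have hMc : ∀ l, ‖c l‖ ≤ M := by
    intro l
    have := hcB l
    rwa [mem_closedBall, dist_zero_right] at this
  have hpt : ∀ (j : Fin k) (x : H), x ∈ W j → ‖x‖ ≤ M →
      ‖x - c j‖ ^ 2 - (⨅ i : Fin k, ‖x - c i‖ ^ 2) ≤ A.indicator (fun _ => 8 * M * δ) x := by
    intro j x hxW hxM
    obtain ⟨i, _, hi⟩ := Finset.exists_min_image Finset.univ (fun i : Fin k => ‖x - c i‖)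
      ⟨Classical.arbitrary (Fin k), Finset.mem_univ _⟩
    have hiInf : (⨅ i' : Fin k, ‖x - c i'‖ ^ 2) = ‖x - c i‖ ^ 2 := by
      refine le_antisymm (ciInf_le (hbdd c x) i) (le_ciInf fun i' => ?_)
      have h1 := hi i' (Finset.mem_univ _)
      nlinarith [norm_nonneg (x - c i)]
    rw [hiInf]
    by_cases hij : i = j
    · subst hij
      have hz : ‖x - c i‖ ^ 2 - ‖x - c i‖ ^ 2 = 0 := by ring
      rw [hz]
      exact Set.indicator_nonneg (fun _ _ => by positivity) x
    · have hxV : x ∈ voronoi k cs j := hxW.1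
      have h1 : ‖x - cs j‖ ≤ ‖x - cs i‖ := hxV i
      have h2 : ‖x - c i‖ ≤ ‖x - c j‖ := hi j (Finset.mem_univ _)
      have e1 : ‖x - c j‖ ^ 2 - ‖x - cs j‖ ^ 2 ≤ 4 * M * ‖c j - cs j‖ :=
        normsq_sub_bound x (c j) (cs j) M hxM (hMc j) (hcsB j)
      have e3 : ‖x - cs i‖ ^ 2 - ‖x - c i‖ ^ 2 ≤ 4 * M * ‖c i - cs i‖ := by
        have h := normsq_sub_bound x (cs i) (c i) M hxM (hcsB i) (hMc i)
        rwa [norm_sub_rev (cs i) (c i)] at h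
      have e1' : ‖x - cs j‖ ^ 2 ≤ ‖x - cs i‖ ^ 2 := by
        nlinarith [norm_nonneg (x - cs j)]
      have e2' : ‖x - c i‖ ^ 2 ≤ ‖x - c j‖ ^ 2 := by
        nlinarith [norm_nonneg (x - c i)]
      have hb1 := mul_le_mul_of_nonneg_left (hnormle j) (by positivity : (0:ℝ) ≤ 4 * M)
      have hb2 := mul_le_mul_of_nonneg_left (hnormle i) (by positivity : (0:ℝ) ≤ 4 * M)
      have hxA : x ∈ A := by
        have hSnn : 0 ≤ ‖x - cs i‖ ^ 2 - ‖x - cs j‖ ^ 2 := by linarith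
        have hSub : ‖x - cs i‖ ^ 2 - ‖x - cs j‖ ^ 2 ≤ 8 * M * δ := by linarith
        have hne : cs i ≠ cs j := by
          intro he
          have hb := hBle i j hij
          rw [he, sub_self, norm_zero] at hb
          linarith
        obtain ⟨y, hy1, hy2⟩ := exists_bisector_point x (cs i) (cs j) hne
        have hyN : y ∈ Ncrit k cs :=
          Set.mem_iUnion.mpr ⟨i, Set.mem_iUnion.mpr ⟨j, Set.mem_iUnion.mpr ⟨hij, hy1⟩⟩⟩
        have hBn2 : B ≤ ‖cs j - cs i‖ := hBle j i (Ne.symm hij)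
        have hdxy : dist x y ≤ t := by
          rw [hy2, abs_of_nonneg hSnn]
          calc (‖x - cs i‖ ^ 2 - ‖x - cs j‖ ^ 2) / (2 * ‖cs j - cs i‖)
              ≤ (8 * M * δ) / (2 * B) :=
                div_le_div₀ (by positivity) hSub (by linarith) (by linarith)
            _ = t := by rw [htdef]; field_simp; ring
        simp only [hAdef, Set.mem_setOf_eq]
        exact (infDist_le_dist_of_mem hyN).trans hdxy
      rw [Set.indicator_of_mem hxA]
      linarith
  have hparts : ∀ j : Fin k,
      (P (W j)).toReal * ‖c j - cs j‖ ^ 2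
        - ∫ x in W j, A.indicator (fun _ => 8 * M * δ) x ∂P
      ≤ (∫ x in W j, (⨅ i : Fin k, ‖x - c i‖ ^ 2) ∂P)
        - ∫ x in W j, ‖x - cs j‖ ^ 2 ∂P := by
    intro j
    have h1 : ∫ x in W j, (‖x - c j‖ ^ 2 - A.indicator (fun _ => 8 * M * δ) x) ∂P
        ≤ ∫ x in W j, (⨅ i : Fin k, ‖x - c i‖ ^ 2) ∂P := by
      refine integral_mono_ae (((hNint (c j)).sub hInd).integrableOn)
        ((hFint c).integrableOn) ?_
      filter_upwards [ae_restrict_mem (hWm j), ae_restrict_of_ae hae] with x hx1 hx2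
      have := hpt j x hx1 hx2
      linarith
    rw [integral_sub ((hNint (c j)).integrableOn) (hInd.integrableOn)] at h1
    have h2 : ∫ x in W j, ‖x - c j‖ ^ 2 ∂P
        = ∫ x in W j, ‖x - cs j‖ ^ 2 ∂P + (P (W j)).toReal * ‖c j - cs j‖ ^ 2 := by
      have h := hexp j (c j)
      rw [hcent j, inner_zero_right, mul_zero, zero_add,
        norm_sub_rev (cs j) (c j)] at h
      exact h
    linarith
  have hsum_ind : ∑ j : Fin k, ∫ x in W j, A.indicator (fun _ => 8 * M * δ) x ∂P
      = (P A).toReal * (8 * M * δ) := by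
    rw [← hsplit _ hInd, integral_indicator_const _ hAm, smul_eq_mul, measureReal_def]
  have hd_c : distortion P k c
      = ∑ j : Fin k, ∫ x in W j, (⨅ i : Fin k, ‖x - c i‖ ^ 2) ∂P := by
    rw [show distortion P k c = ∫ x, (⨅ i : Fin k, ‖x - c i‖ ^ 2) ∂P from rfl,
      hsplit _ (hFint c)]
  have hmain : p * Δ - (P A).toReal * (8 * M * δ)
      ≤ distortion P k c - distortion P k cs := by
    rw [hd_c, hdcs, ← Finset.sum_sub_distrib]
    calc p * Δ - (P A).toReal * (8 * M * δ)
        = ∑ j : Fin k, (p * ‖c j - cs j‖ ^ 2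
            - ∫ x in W j, A.indicator (fun _ => 8 * M * δ) x ∂P) := by
          rw [Finset.sum_sub_distrib, hsum_ind, hΔdef, Finset.mul_sum]
      _ ≤ ∑ j : Fin k, ((∫ x in W j, (⨅ i : Fin k, ‖x - c i‖ ^ 2) ∂P)
            - ∫ x in W j, ‖x - cs j‖ ^ 2 ∂P) := by
          refine Finset.sum_le_sum fun j _ => ?_
          have hpj := hparts j
          have hple2 : p * ‖c j - cs j‖ ^ 2 ≤ (P (W j)).toReal * ‖c j - cs j‖ ^ 2 :=
            mul_le_mul_of_nonneg_right (hpmin_le j) (sq_nonneg _)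
          linarith
  have hA8 : (P A).toReal * (8 * M * δ) ≤ (p * δ / (32 * M)) * (8 * M * δ) :=
    mul_le_mul_of_nonneg_right hPA (by positivity)
  have heq : (p * δ / (32 * M)) * (8 * M * δ) = p * Δ / 4 := by
    rw [← hδsq]
    field_simp
    ring
  nlinarith [hmain, hA8, heq, mul_nonneg hple.le hΔ0]
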